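/- Let Q be a quantale on the diamond M3, with pairwise distinct elements ⊥, α, β, γ, ⊤ where α, β, γ are pairwise incomparable with pairwise joins ⊤ and pairwise meets ⊥, satisfying γ * a ⊔ a * γ ≤ a for all a ∈ Q, and assume γ * γ ≠ γ. Then γ * γ = ⊥, ⊤ * γ = ⊥ = γ * ⊤, and the multiplication is constant on {α, β, ⊤}: x * y = ⊤ * ⊤ for all x, y ∈ {α, β, ⊤}. -/
import Mathlib


/-- Let `Q` be a quantale on the diamond `M3` satisfying
`γ * a ⊔ a * γ ≤ a` for all `a`, with `γ * γ ≠ γ`. Then `γ * γ = ⊥`,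
`⊤ * γ = ⊥ = γ * ⊤`, and the multiplication is constant on `{α, β, ⊤}`. -/
theorem stmt_18 {Q : Type*} [CompleteLattice Q] (mul : Q → Q → Q)
    (hassoc : ∀ a b c : Q, mul (mul a b) c = mul a (mul b c))
    (hsSup_left : ∀ (A : Set Q) (b : Q), mul (sSup A) b = ⨆ a ∈ A, mul a b)
    (hsSup_right : ∀ (A : Set Q) (b : Q), mul b (sSup A) = ⨆ a ∈ A, mul b a)
    (α β γ : Q)
    (hdistinct : ([⊥, α, β, γ, ⊤] : List Q).Pairwise (· ≠ ·))
    (hcover : ∀ q : Q, q = ⊥ ∨ q = α ∨ q = β ∨ q = γ ∨ q = ⊤)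
    (hαβ : ¬ α ≤ β ∧ ¬ β ≤ α) (hαγ : ¬ α ≤ γ ∧ ¬ γ ≤ α) (hβγ : ¬ β ≤ γ ∧ ¬ γ ≤ β)
    (hjαβ : α ⊔ β = ⊤) (hjαγ : α ⊔ γ = ⊤) (hjβγ : β ⊔ γ = ⊤)
    (hmαβ : α ⊓ β = ⊥) (hmαγ : α ⊓ γ = ⊥) (hmβγ : β ⊓ γ = ⊥)
    (hprop : ∀ a : Q, mul γ a ⊔ mul a γ ≤ a)
    (hnonunital : mul γ γ ≠ γ) :
    mul γ γ = ⊥ ∧ mul ⊤ γ = ⊥ ∧ mul γ ⊤ = ⊥ ∧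
    (∀ x y : Q, (x = α ∨ x = β ∨ x = ⊤) → (y = α ∨ y = β ∨ y = ⊤) →
      mul x y = mul ⊤ ⊤) := by
  simp only [List.pairwise_cons, List.mem_cons, List.mem_singleton, List.not_mem_nil] at hdistinct
  have hγT : γ ≠ ⊤ := hdistinct.2.2.2.1 ⊤ (Or.inl rfl)
  -- binary distributivity
  have hl : ∀ a b c : Q, mul (a ⊔ b) c = mul a c ⊔ mul b c := by
    intro a b c
    have h := hsSup_left {a, b} c
    rw [sSup_pair] at h
    simpa [iSup_or, iSup_sup_eq, iSup_iSup_eq_left, iSup_iSup_eq_right] using h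
  have hr : ∀ a b c : Q, mul a (b ⊔ c) = mul a b ⊔ mul a c := by
    intro a b c
    have h := hsSup_right {b, c} a
    rw [sSup_pair] at h
    simpa [iSup_or, iSup_sup_eq, iSup_iSup_eq_left, iSup_iSup_eq_right] using h
  -- monotonicity
  have hmonor : ∀ a b c : Q, b ≤ c → mul a b ≤ mul a c := by
    intro a b c h
    have : mul a c = mul a b ⊔ mul a c := by rw [← hr, sup_eq_right.mpr h]
    rw [this]; exact le_sup_left
  have hmonol : ∀ a b c : Q, b ≤ c → mul b a ≤ mul c a := by
    intro a b c h
    have : mul c a = mul b a ⊔ mul c a := by rw [← hl, sup_eq_right.mpr h]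
    rw [this]; exact le_sup_left
  -- γ*γ = ⊥
  have h1 : mul γ γ ≤ γ := le_trans le_sup_left (hprop γ)
  have hγγ : mul γ γ = ⊥ := by
    rcases hcover (mul γ γ) with h | h | h | h | h
    · exact h
    · exact absurd (h ▸ h1) hαγ.1
    · exact absurd (h ▸ h1) hβγ.1
    · exact absurd h hnonunital
    · exact absurd (top_le_iff.mp (h ▸ h1)) hγT
  -- ⊤*γ = ⊥
  have hTγ : mul ⊤ γ = ⊥ := by
    have e1 : mul ⊤ γ = mul α γ := by
      rw [← hjαγ, hl, hγγ, sup_bot_eq]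
    have e2 : mul ⊤ γ = mul β γ := by
      rw [← hjβγ, hl, hγγ, sup_bot_eq]
    have hle : mul ⊤ γ ≤ α ⊓ β := by
      refine le_inf ?_ ?_
      · rw [e1]; exact le_trans le_sup_right (hprop α)
      · rw [e2]; exact le_trans le_sup_right (hprop β)
    rw [hmαβ] at hle
    exact le_bot_iff.mp hle
  -- γ*⊤ = ⊥
  have hγT' : mul γ ⊤ = ⊥ := by
    have e1 : mul γ ⊤ = mul γ α := by
      rw [← hjαγ, hr, hγγ, sup_bot_eq]
    have e2 : mul γ ⊤ = mul γ β := by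
      rw [← hjβγ, hr, hγγ, sup_bot_eq]
    have hle : mul γ ⊤ ≤ α ⊓ β := by
      refine le_inf ?_ ?_
      · rw [e1]; exact le_trans le_sup_left (hprop α)
      · rw [e2]; exact le_trans le_sup_left (hprop β)
    rw [hmαβ] at hle
    exact le_bot_iff.mp hle
  have hγy : ∀ y : Q, mul γ y = ⊥ := fun y =>
    le_bot_iff.mp (hγT' ▸ hmonor γ y ⊤ le_top)
  have hyγ : ∀ y : Q, mul y γ = ⊥ := fun y =>
    le_bot_iff.mp (hTγ ▸ hmonol γ y ⊤ le_top)
  refine ⟨hγγ, hTγ, hγT', ?_⟩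
  have hsupγ : ∀ x : Q, (x = α ∨ x = β ∨ x = ⊤) → x ⊔ γ = ⊤ := by
    rintro x (rfl | rfl | rfl)
    · exact hjαγ
    · exact hjβγ
    · exact top_sup_eq γ
  intro x y hx hy
  have hTy : mul ⊤ y = mul x y := by
    rw [← hsupγ x hx, hl, hγy, sup_bot_eq]
  have hTT : mul ⊤ ⊤ = mul ⊤ y := by
    rw [← hsupγ y hy, hr, hyγ, sup_bot_eq]
  rw [hTT, hTy]
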